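/- arXiv:0710.0800 — 2 statements merged into one kernel-verified Lean document; each statement's English description precedes it below -/
import Mathlib

section
/- Explicit finite-volume lower bound for the pressure: for any positive integers N1, N2 with N = N1 + N2 and α = N1/N, and for any reals r1, r2, writing t1 = tanh r1 and t2 = tanh r2, one has p_N ≥ log 2 + α·log cosh r1 + (1−α)·log cosh r2 + (1/2)·(J11 α² t1² + J22 (1−α)² t2² + 2 J12 α(1−α) t1 t2) + α h1 t1 + (1−α) h2 t2 − α r1 t1 − (1−α) r2 t2 + J11 α/(2N) + J22 (1−α)/(2N) − J11 α t1²/N − J22 (1−α) t2²/N. -/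
open Real Filter

noncomputable def spin (b : Bool) : ℝ := if b then 1 else -1

/-- The Hamiltonian of the bipartite mean field model: the first `N1` sites form
block `A`, the remaining `N2` sites form block `B`. -/
noncomputable def ham (J11 J12 J22 h1 h2 : ℝ) (N1 N2 : ℕ)
    (σ : Fin (N1 + N2) → Bool) : ℝ :=
  -(1 / (2 * ((N1 + N2 : ℕ) : ℝ))) *
      (J11 * ∑ i : Fin (N1 + N2), ∑ j : Fin (N1 + N2),
          (if (i : ℕ) < N1 ∧ (j : ℕ) < N1 then spin (σ i) * spin (σ j) else 0)
        + 2 * J12 * ∑ i : Fin (N1 + N2), ∑ j : Fin (N1 + N2),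
          (if (i : ℕ) < N1 ∧ N1 ≤ (j : ℕ) then spin (σ i) * spin (σ j) else 0)
        + J22 * ∑ i : Fin (N1 + N2), ∑ j : Fin (N1 + N2),
          (if N1 ≤ (i : ℕ) ∧ N1 ≤ (j : ℕ) then spin (σ i) * spin (σ j) else 0))
    - h1 * ∑ i : Fin (N1 + N2), (if (i : ℕ) < N1 then spin (σ i) else 0)
    - h2 * ∑ i : Fin (N1 + N2), (if N1 ≤ (i : ℕ) then spin (σ i) else 0)

/-- The pressure per particle `p_N = (1/N) log Σ_σ exp(-H_N(σ))`. -/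
noncomputable def pressure (J11 J12 J22 h1 h2 : ℝ) (N1 N2 : ℕ) : ℝ :=
  (1 / ((N1 + N2 : ℕ) : ℝ)) *
    Real.log (∑ σ : Fin (N1 + N2) → Bool,
      Real.exp (-(ham J11 J12 J22 h1 h2 N1 N2 σ)))


lemma spin_mul_self (b : Bool) : spin b * spin b = 1 := by cases b <;> simp [spin]

noncomputable def wgt (r : ℝ) (b : Bool) : ℝ := Real.exp (r * spin b) / (2 * Real.cosh r)

lemma wgt_pos (r : ℝ) (b : Bool) : 0 < wgt r b :=
  div_pos (Real.exp_pos _) (by positivity)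

lemma two_cosh_pos (r : ℝ) : (0:ℝ) < 2 * Real.cosh r := by positivity

lemma wgt_sum (r : ℝ) : wgt r true + wgt r false = 1 := by
  have h := two_cosh_pos r
  rw [wgt, wgt, ← add_div, div_eq_one_iff_eq h.ne']
  simp [spin, Real.cosh_eq, mul_comm]
  ring

lemma spin_true : spin true = 1 := rfl
lemma spin_false : spin false = -1 := rfl

lemma wgt_spin (r : ℝ) : wgt r true * spin true + wgt r false * spin false = Real.tanh r := by
  have h := (Real.cosh_pos r).ne'
  rw [wgt, wgt, Real.tanh_eq_sinh_div_cosh, Real.sinh_eq, spin_true, spin_false]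
  field_simp
  ring

lemma log_wgt (r : ℝ) (b : Bool) :
    Real.log (wgt r b) = r * spin b - Real.log 2 - Real.log (Real.cosh r) := by
  rw [wgt, Real.log_div (Real.exp_ne_zero _) (two_cosh_pos r).ne',
    Real.log_exp, Real.log_mul two_ne_zero (Real.cosh_pos r).ne']
  ring

lemma sum_prod_bool {n : ℕ} (g : Fin n → Bool → ℝ) :
    ∑ σ : Fin n → Bool, ∏ i, g i (σ i) = ∏ i, (g i true + g i false) := by
  have h : ∏ i, ∑ b, g i b = ∑ σ : Fin n → Bool, ∏ i, g i (σ i) :=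
    Fintype.prod_sum g
  rw [← h]
  exact Finset.prod_congr rfl fun i _ => Fintype.sum_bool _

lemma sum_prod_one {n : ℕ} (w : Fin n → Bool → ℝ)
    (hw : ∀ i, w i true + w i false = 1) (f : Bool → ℝ) (k : Fin n) :
    ∑ σ : Fin n → Bool, (∏ i, w i (σ i)) * f (σ k)
      = w k true * f true + w k false * f false := by
  have h1 : ∀ σ : Fin n → Bool, (∏ i, w i (σ i)) * f (σ k)
      = ∏ i, (w i (σ i) * (if i = k then f (σ i) else 1)) := by
    intro σ
    rw [Finset.prod_mul_distrib, Finset.prod_ite_eq' Finset.univ k (fun i => f (σ i))]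
    simp
  simp only [h1]
  rw [sum_prod_bool (fun i b => w i b * if i = k then f b else 1)]
  rw [Finset.prod_eq_single k]
  · simp
  · intro i _ hik
    simpa [hik] using hw i
  · simp

lemma sum_prod_two {n : ℕ} (w : Fin n → Bool → ℝ)
    (hw : ∀ i, w i true + w i false = 1) (f g : Bool → ℝ) (k l : Fin n) (hkl : k ≠ l) :
    ∑ σ : Fin n → Bool, (∏ i, w i (σ i)) * (f (σ k) * g (σ l))
      = (w k true * f true + w k false * f false)
        * (w l true * g true + w l false * g false) := by
  have h1 : ∀ σ : Fin n → Bool, (∏ i, w i (σ i)) * (f (σ k) * g (σ l))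
      = ∏ i, (w i (σ i) * (if i = k then f (σ i) else 1) * (if i = l then g (σ i) else 1)) := by
    intro σ
    rw [Finset.prod_mul_distrib, Finset.prod_mul_distrib,
      Finset.prod_ite_eq' Finset.univ k (fun i => f (σ i)),
      Finset.prod_ite_eq' Finset.univ l (fun i => g (σ i))]
    simp; ring
  simp only [h1]
  rw [sum_prod_bool (fun i b => w i b * (if i = k then f b else 1) * (if i = l then g b else 1))]
  have hsub : ({k, l} : Finset (Fin n)) ⊆ Finset.univ := Finset.subset_univ _
  rw [← Finset.prod_subset hsub]
  · rw [Finset.prod_pair hkl]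
    simp [hkl, Ne.symm hkl]
  · intro i _ hi
    simp only [Finset.mem_insert, Finset.mem_singleton, not_or] at hi
    simpa [hi.1, hi.2] using hw i

lemma sum_if_lt (N1 N2 : ℕ) (c d : ℝ) :
    ∑ i : Fin (N1 + N2), (if (i : ℕ) < N1 then c else d) = N1 * c + N2 * d := by
  rw [Fin.sum_univ_eq_sum_range (fun i => if i < N1 then c else d) (N1 + N2),
    Finset.sum_range_add]
  have h1 : ∑ i ∈ Finset.range N1, (if i < N1 then c else d) = N1 * c := by
    rw [Finset.sum_congr rfl (fun i hi => if_pos (Finset.mem_range.mp hi)),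
      Finset.sum_const, Finset.card_range, nsmul_eq_mul]
  have h2 : ∑ i ∈ Finset.range N2, (if N1 + i < N1 then c else d) = N2 * d := by
    rw [Finset.sum_congr rfl (fun i _ => if_neg (by omega)),
      Finset.sum_const, Finset.card_range, nsmul_eq_mul]
  rw [h1, h2]

lemma sum_if_le (N1 N2 : ℕ) (c d : ℝ) :
    ∑ i : Fin (N1 + N2), (if N1 ≤ (i : ℕ) then c else d) = N2 * c + N1 * d := by
  have h : ∀ i : Fin (N1 + N2), (if N1 ≤ (i : ℕ) then c else d)
      = (if (i : ℕ) < N1 then d else c) := by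
    intro i
    rcases lt_or_ge (i : ℕ) N1 with h | h
    · rw [if_neg (by omega), if_pos h]
    · rw [if_pos h, if_neg (by omega)]
  rw [Finset.sum_congr rfl (fun i _ => h i), sum_if_lt]
  ring

lemma sum_sum_mul {ι κ : Type*} [Fintype ι] [Fintype κ] (A : ι → ℝ) (B : κ → ℝ) (c : ℝ) :
    ∑ i, ∑ j, A i * (B j * c) = (∑ i, A i) * ((∑ j, B j) * c) := by
  simp_rw [← Finset.mul_sum, ← Finset.sum_mul]

lemma swap_sum_two {n : ℕ} (ν : (Fin n → Bool) → ℝ) (F : (Fin n → Bool) → Fin n → Fin n → ℝ) :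
    ∑ σ, ν σ * (∑ i, ∑ j, F σ i j) = ∑ i, ∑ j, ∑ σ, ν σ * F σ i j := by
  simp_rw [Finset.mul_sum]
  rw [Finset.sum_comm]
  exact Finset.sum_congr rfl fun i _ => Finset.sum_comm

lemma swap_sum_one {n : ℕ} (ν : (Fin n → Bool) → ℝ) (F : (Fin n → Bool) → Fin n → ℝ) :
    ∑ σ, ν σ * (∑ i, F σ i) = ∑ i, ∑ σ, ν σ * F σ i := by
  simp_rw [Finset.mul_sum]
  exact Finset.sum_comm


set_option maxHeartbeats 2000000 in
/-- explicit finite-volume lower bound for the pressure, with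
`α = N1/N`, `t1 = tanh r1`, `t2 = tanh r2`. -/
theorem pressure_finite_volume_lower_bound
    (J11 J12 J22 h1 h2 : ℝ) (hJ11 : 0 < J11) (hJ22 : 0 < J22)
    (N1 N2 : ℕ) (hN1 : 0 < N1) (hN2 : 0 < N2)
    (r1 r2 α NR t1 t2 : ℝ)
    (hα : α = (N1 : ℝ) / ((N1 + N2 : ℕ) : ℝ)) (hNR : NR = ((N1 + N2 : ℕ) : ℝ))
    (ht1 : t1 = Real.tanh r1) (ht2 : t2 = Real.tanh r2) :
    pressure J11 J12 J22 h1 h2 N1 N2 ≥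
      Real.log 2 + α * Real.log (Real.cosh r1) + (1 - α) * Real.log (Real.cosh r2)
        + (1 / 2) * (J11 * α ^ 2 * t1 ^ 2 + J22 * (1 - α) ^ 2 * t2 ^ 2
            + 2 * J12 * α * (1 - α) * t1 * t2)
        + α * h1 * t1 + (1 - α) * h2 * t2 - α * r1 * t1 - (1 - α) * r2 * t2
        + J11 * α / (2 * NR) + J22 * (1 - α) / (2 * NR)
        - J11 * α * t1 ^ 2 / NR - J22 * (1 - α) * t2 ^ 2 / NR := by
  subst hα hNR ht1 ht2
  set NN : ℝ := ((N1 + N2 : ℕ) : ℝ) with hNNdef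
  have hNNpos : (0:ℝ) < NN := by
    rw [hNNdef]; exact_mod_cast Nat.add_pos_left hN1 N2
  have hNN2 : NN = (N1 : ℝ) + (N2 : ℝ) := by rw [hNNdef]; push_cast; ring
  clear_value NN
  set w : Fin (N1 + N2) → Bool → ℝ :=
    fun i b => wgt (if (i : ℕ) < N1 then r1 else r2) b with hwdef
  set ν : (Fin (N1 + N2) → Bool) → ℝ := fun σ => ∏ i, w i (σ i) with hνdef
  have hwsum : ∀ i, w i true + w i false = 1 := fun i => wgt_sum _
  have hwspin : ∀ i : Fin (N1 + N2),
      w i true * spin true + w i false * spin false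
        = if (i : ℕ) < N1 then Real.tanh r1 else Real.tanh r2 :=
    fun i => (wgt_spin _).trans (apply_ite Real.tanh _ r1 r2)
  have hνpos : ∀ σ, 0 < ν σ := fun σ => Finset.prod_pos fun i _ => wgt_pos _ _
  have hνsum : ∑ σ : Fin (N1 + N2) → Bool, ν σ = 1 := by
    rw [hνdef]
    rw [sum_prod_bool w]
    exact Finset.prod_eq_one fun i _ => hwsum i
  -- log of the product measure
  have hlog : ∀ σ : Fin (N1 + N2) → Bool, Real.log (ν σ)
      = (∑ i : Fin (N1 + N2), (if (i : ℕ) < N1 then r1 else r2) * spin (σ i))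
        - (NN * Real.log 2 + ((N1 : ℝ) * Real.log (Real.cosh r1)
            + (N2 : ℝ) * Real.log (Real.cosh r2))) := by
    intro σ
    show Real.log (∏ i, w i (σ i)) = _
    rw [Real.log_prod (fun i _ => (wgt_pos _ _).ne')]
    rw [Finset.sum_congr rfl fun i (_ : i ∈ Finset.univ) => log_wgt _ (σ i)]
    rw [Finset.sum_sub_distrib, Finset.sum_sub_distrib]
    have hc2 : ∑ _i : Fin (N1 + N2), Real.log 2 = NN * Real.log 2 := by
      rw [Finset.sum_const, Finset.card_univ, Fintype.card_fin, nsmul_eq_mul, hNNdef]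
    have hcc : ∑ i : Fin (N1 + N2),
        Real.log (Real.cosh (if (i : ℕ) < N1 then r1 else r2))
        = (N1 : ℝ) * Real.log (Real.cosh r1) + (N2 : ℝ) * Real.log (Real.cosh r2) := by
      rw [Finset.sum_congr rfl fun i (_ : i ∈ Finset.univ) =>
        apply_ite (fun r => Real.log (Real.cosh r)) _ r1 r2, sum_if_lt]
    rw [hc2, hcc]; ring
  -- one and two point functions
  have hE1 : ∀ k, ∑ σ : Fin (N1 + N2) → Bool, ν σ * spin (σ k)
      = if (k : ℕ) < N1 then Real.tanh r1 else Real.tanh r2 :=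
    fun k => (sum_prod_one w hwsum spin k).trans (hwspin k)
  have hE2 : ∀ i j : Fin (N1 + N2), ∑ σ : Fin (N1 + N2) → Bool,
      ν σ * (spin (σ i) * spin (σ j))
      = if i = j then 1 else
          (if (i : ℕ) < N1 then Real.tanh r1 else Real.tanh r2)
          * (if (j : ℕ) < N1 then Real.tanh r1 else Real.tanh r2) := by
    intro i j
    by_cases h : i = j
    · subst h
      rw [if_pos rfl]
      simp only [spin_mul_self, mul_one]
      exact hνsum
    · rw [if_neg h]
      exact (sum_prod_two w hwsum spin spin i j h).trans (by rw [hwspin i, hwspin j])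
  -- the AA double sum
  have hSAA : ∑ σ : Fin (N1 + N2) → Bool, ν σ *
      (∑ i : Fin (N1 + N2), ∑ j : Fin (N1 + N2),
        (if (i : ℕ) < N1 ∧ (j : ℕ) < N1 then spin (σ i) * spin (σ j) else 0))
      = (N1 : ℝ) ^ 2 * Real.tanh r1 ^ 2 + (N1 : ℝ) * (1 - Real.tanh r1 ^ 2) := by
    rw [swap_sum_two]
    have hinner : ∀ i j : Fin (N1 + N2), ∑ σ : Fin (N1 + N2) → Bool,
        ν σ * (if (i : ℕ) < N1 ∧ (j : ℕ) < N1 then spin (σ i) * spin (σ j) else 0)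
        = if (i : ℕ) < N1 ∧ (j : ℕ) < N1 then
            (if i = j then 1 else
              (if (i : ℕ) < N1 then Real.tanh r1 else Real.tanh r2)
              * (if (j : ℕ) < N1 then Real.tanh r1 else Real.tanh r2)) else 0 := by
      intro i j
      by_cases h : (i : ℕ) < N1 ∧ (j : ℕ) < N1
      · simp only [if_pos h]; exact hE2 i j
      · simp only [if_neg h, mul_zero, Finset.sum_const_zero]
    rw [Finset.sum_congr rfl fun i _ => Finset.sum_congr rfl fun j _ => hinner i j]
    have hterm : ∀ i j : Fin (N1 + N2),
        (if (i : ℕ) < N1 ∧ (j : ℕ) < N1 then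
            (if i = j then 1 else
              (if (i : ℕ) < N1 then Real.tanh r1 else Real.tanh r2)
              * (if (j : ℕ) < N1 then Real.tanh r1 else Real.tanh r2)) else 0)
        = (if (i : ℕ) < N1 then (1:ℝ) else 0) * ((if (j : ℕ) < N1 then (1:ℝ) else 0)
              * (Real.tanh r1 * Real.tanh r1))
          + (if i = j then (if (i : ℕ) < N1 then 1 - Real.tanh r1 * Real.tanh r1 else 0)
              else 0) := by
      intro i j
      by_cases hij : i = j
      · subst hij
        by_cases h1 : (i : ℕ) < N1 <;> simp [h1] <;> ring
      · by_cases h1 : (i : ℕ) < N1 <;> by_cases h2 : (j : ℕ) < N1 <;>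
          simp [hij, h1, h2]
    rw [Finset.sum_congr rfl fun i _ => Finset.sum_congr rfl fun j _ => hterm i j]
    simp only [Finset.sum_add_distrib]
    rw [sum_sum_mul (fun i : Fin (N1 + N2) => if (i : ℕ) < N1 then (1:ℝ) else 0)
        (fun j : Fin (N1 + N2) => if (j : ℕ) < N1 then (1:ℝ) else 0)]
    have hdiag : ∑ i : Fin (N1 + N2), ∑ j : Fin (N1 + N2),
        (if i = j then (if (i : ℕ) < N1 then 1 - Real.tanh r1 * Real.tanh r1 else 0) else 0)
        = ∑ i : Fin (N1 + N2), (if (i : ℕ) < N1 then 1 - Real.tanh r1 * Real.tanh r1 else 0) := by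
      refine Finset.sum_congr rfl fun i _ => ?_
      rw [Finset.sum_ite_eq Finset.univ i
        (fun _ => if (i : ℕ) < N1 then 1 - Real.tanh r1 * Real.tanh r1 else 0)]
      simp
    rw [hdiag, sum_if_lt, sum_if_lt]
    ring
  -- the AB double sum
  have hSAB : ∑ σ : Fin (N1 + N2) → Bool, ν σ *
      (∑ i : Fin (N1 + N2), ∑ j : Fin (N1 + N2),
        (if (i : ℕ) < N1 ∧ N1 ≤ (j : ℕ) then spin (σ i) * spin (σ j) else 0))
      = (N1 : ℝ) * (N2 : ℝ) * (Real.tanh r1 * Real.tanh r2) := by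
    rw [swap_sum_two]
    have hinner : ∀ i j : Fin (N1 + N2), ∑ σ : Fin (N1 + N2) → Bool,
        ν σ * (if (i : ℕ) < N1 ∧ N1 ≤ (j : ℕ) then spin (σ i) * spin (σ j) else 0)
        = if (i : ℕ) < N1 ∧ N1 ≤ (j : ℕ) then
            (if i = j then 1 else
              (if (i : ℕ) < N1 then Real.tanh r1 else Real.tanh r2)
              * (if (j : ℕ) < N1 then Real.tanh r1 else Real.tanh r2)) else 0 := by
      intro i j
      by_cases h : (i : ℕ) < N1 ∧ N1 ≤ (j : ℕ)
      · simp only [if_pos h]; exact hE2 i j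
      · simp only [if_neg h, mul_zero, Finset.sum_const_zero]
    rw [Finset.sum_congr rfl fun i _ => Finset.sum_congr rfl fun j _ => hinner i j]
    have hterm : ∀ i j : Fin (N1 + N2),
        (if (i : ℕ) < N1 ∧ N1 ≤ (j : ℕ) then
            (if i = j then 1 else
              (if (i : ℕ) < N1 then Real.tanh r1 else Real.tanh r2)
              * (if (j : ℕ) < N1 then Real.tanh r1 else Real.tanh r2)) else 0)
        = (if (i : ℕ) < N1 then (1:ℝ) else 0) * ((if N1 ≤ (j : ℕ) then (1:ℝ) else 0)
              * (Real.tanh r1 * Real.tanh r2)) := by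
      intro i j
      by_cases h1 : (i : ℕ) < N1 <;> by_cases h2 : N1 ≤ (j : ℕ)
      · have hij : i ≠ j := by
          intro he; rw [he] at h1; omega
        have hj : ¬ (j : ℕ) < N1 := by omega
        simp [h1, h2, hij, hj]
      · simp [h1, h2]
      · simp [h1, h2]
      · simp [h1, h2]
    rw [Finset.sum_congr rfl fun i _ => Finset.sum_congr rfl fun j _ => hterm i j]
    rw [sum_sum_mul (fun i : Fin (N1 + N2) => if (i : ℕ) < N1 then (1:ℝ) else 0)
        (fun j : Fin (N1 + N2) => if N1 ≤ (j : ℕ) then (1:ℝ) else 0)]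
    rw [sum_if_lt, sum_if_le]
    ring
  -- the BB double sum
  have hSBB : ∑ σ : Fin (N1 + N2) → Bool, ν σ *
      (∑ i : Fin (N1 + N2), ∑ j : Fin (N1 + N2),
        (if N1 ≤ (i : ℕ) ∧ N1 ≤ (j : ℕ) then spin (σ i) * spin (σ j) else 0))
      = (N2 : ℝ) ^ 2 * Real.tanh r2 ^ 2 + (N2 : ℝ) * (1 - Real.tanh r2 ^ 2) := by
    rw [swap_sum_two]
    have hinner : ∀ i j : Fin (N1 + N2), ∑ σ : Fin (N1 + N2) → Bool,
        ν σ * (if N1 ≤ (i : ℕ) ∧ N1 ≤ (j : ℕ) then spin (σ i) * spin (σ j) else 0)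
        = if N1 ≤ (i : ℕ) ∧ N1 ≤ (j : ℕ) then
            (if i = j then 1 else
              (if (i : ℕ) < N1 then Real.tanh r1 else Real.tanh r2)
              * (if (j : ℕ) < N1 then Real.tanh r1 else Real.tanh r2)) else 0 := by
      intro i j
      by_cases h : N1 ≤ (i : ℕ) ∧ N1 ≤ (j : ℕ)
      · simp only [if_pos h]; exact hE2 i j
      · simp only [if_neg h, mul_zero, Finset.sum_const_zero]
    rw [Finset.sum_congr rfl fun i _ => Finset.sum_congr rfl fun j _ => hinner i j]
    have hterm : ∀ i j : Fin (N1 + N2),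
        (if N1 ≤ (i : ℕ) ∧ N1 ≤ (j : ℕ) then
            (if i = j then 1 else
              (if (i : ℕ) < N1 then Real.tanh r1 else Real.tanh r2)
              * (if (j : ℕ) < N1 then Real.tanh r1 else Real.tanh r2)) else 0)
        = (if N1 ≤ (i : ℕ) then (1:ℝ) else 0) * ((if N1 ≤ (j : ℕ) then (1:ℝ) else 0)
              * (Real.tanh r2 * Real.tanh r2))
          + (if i = j then (if N1 ≤ (i : ℕ) then 1 - Real.tanh r2 * Real.tanh r2 else 0)
              else 0) := by
      intro i j
      by_cases hij : i = j
      · subst hij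
        by_cases h1 : N1 ≤ (i : ℕ)
        · have hi : ¬ (i : ℕ) < N1 := by omega
          simp [h1, hi]
          try ring
        · simp [h1]
      · by_cases h1 : N1 ≤ (i : ℕ) <;> by_cases h2 : N1 ≤ (j : ℕ)
        · have hi : ¬ (i : ℕ) < N1 := by omega
          have hj : ¬ (j : ℕ) < N1 := by omega
          simp [hij, h1, h2, hi, hj]
        · simp [hij, h1, h2]
        · simp [hij, h1, h2]
        · simp [hij, h1, h2]
    rw [Finset.sum_congr rfl fun i _ => Finset.sum_congr rfl fun j _ => hterm i j]
    simp only [Finset.sum_add_distrib]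
    rw [sum_sum_mul (fun i : Fin (N1 + N2) => if N1 ≤ (i : ℕ) then (1:ℝ) else 0)
        (fun j : Fin (N1 + N2) => if N1 ≤ (j : ℕ) then (1:ℝ) else 0)]
    have hdiag : ∑ i : Fin (N1 + N2), ∑ j : Fin (N1 + N2),
        (if i = j then (if N1 ≤ (i : ℕ) then 1 - Real.tanh r2 * Real.tanh r2 else 0) else 0)
        = ∑ i : Fin (N1 + N2), (if N1 ≤ (i : ℕ) then 1 - Real.tanh r2 * Real.tanh r2 else 0) := by
      refine Finset.sum_congr rfl fun i _ => ?_
      rw [Finset.sum_ite_eq Finset.univ i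
        (fun _ => if N1 ≤ (i : ℕ) then 1 - Real.tanh r2 * Real.tanh r2 else 0)]
      simp
    rw [hdiag, sum_if_le, sum_if_le]
    ring
  -- single site sums
  have hSA : ∑ σ : Fin (N1 + N2) → Bool, ν σ *
      (∑ i : Fin (N1 + N2), (if (i : ℕ) < N1 then spin (σ i) else 0))
      = (N1 : ℝ) * Real.tanh r1 := by
    rw [swap_sum_one]
    have hinner : ∀ i : Fin (N1 + N2), ∑ σ : Fin (N1 + N2) → Bool,
        ν σ * (if (i : ℕ) < N1 then spin (σ i) else 0)
        = if (i : ℕ) < N1 then Real.tanh r1 else 0 := by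
      intro i
      by_cases h : (i : ℕ) < N1
      · simp only [if_pos h]
        rw [hE1 i, if_pos h]
      · simp only [if_neg h, mul_zero, Finset.sum_const_zero]
    rw [Finset.sum_congr rfl fun i _ => hinner i, sum_if_lt]
    ring
  have hSB : ∑ σ : Fin (N1 + N2) → Bool, ν σ *
      (∑ i : Fin (N1 + N2), (if N1 ≤ (i : ℕ) then spin (σ i) else 0))
      = (N2 : ℝ) * Real.tanh r2 := by
    rw [swap_sum_one]
    have hinner : ∀ i : Fin (N1 + N2), ∑ σ : Fin (N1 + N2) → Bool,
        ν σ * (if N1 ≤ (i : ℕ) then spin (σ i) else 0)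
        = if N1 ≤ (i : ℕ) then Real.tanh r2 else 0 := by
      intro i
      by_cases h : N1 ≤ (i : ℕ)
      · simp only [if_pos h]
        rw [hE1 i, if_neg (by omega)]
      · simp only [if_neg h, mul_zero, Finset.sum_const_zero]
    rw [Finset.sum_congr rfl fun i _ => hinner i, sum_if_le]
    ring
  have hSr : ∑ σ : Fin (N1 + N2) → Bool, ν σ *
      (∑ i : Fin (N1 + N2), (if (i : ℕ) < N1 then r1 else r2) * spin (σ i))
      = (N1 : ℝ) * (r1 * Real.tanh r1) + (N2 : ℝ) * (r2 * Real.tanh r2) := by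
    rw [swap_sum_one]
    have hinner : ∀ i : Fin (N1 + N2), ∑ σ : Fin (N1 + N2) → Bool,
        ν σ * ((if (i : ℕ) < N1 then r1 else r2) * spin (σ i))
        = if (i : ℕ) < N1 then r1 * Real.tanh r1 else r2 * Real.tanh r2 := by
      intro i
      have hpull : ∑ σ : Fin (N1 + N2) → Bool,
          ν σ * ((if (i : ℕ) < N1 then r1 else r2) * spin (σ i))
          = (if (i : ℕ) < N1 then r1 else r2) * ∑ σ : Fin (N1 + N2) → Bool, ν σ * spin (σ i) := by
        rw [Finset.mul_sum]
        exact Finset.sum_congr rfl fun σ _ => by ring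
      rw [hpull, hE1 i]
      by_cases h : (i : ℕ) < N1 <;> simp [h]
    rw [Finset.sum_congr rfl fun i _ => hinner i, sum_if_lt]
  have hconst : ∀ C : ℝ, ∑ σ : Fin (N1 + N2) → Bool, ν σ * C = C := by
    intro C
    rw [← Finset.sum_mul, hνsum, one_mul]
  -- the Gibbs variational expression in closed form
  have hL : ∑ σ : Fin (N1 + N2) → Bool,
      ν σ * (-(ham J11 J12 J22 h1 h2 N1 N2 σ) - Real.log (ν σ))
      = (1 / (2 * NN)) * J11 * ((N1 : ℝ) ^ 2 * Real.tanh r1 ^ 2 + (N1 : ℝ) * (1 - Real.tanh r1 ^ 2))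
        + (1 / (2 * NN)) * (2 * J12) * ((N1 : ℝ) * (N2 : ℝ) * (Real.tanh r1 * Real.tanh r2))
        + (1 / (2 * NN)) * J22 * ((N2 : ℝ) ^ 2 * Real.tanh r2 ^ 2 + (N2 : ℝ) * (1 - Real.tanh r2 ^ 2))
        + h1 * ((N1 : ℝ) * Real.tanh r1) + h2 * ((N2 : ℝ) * Real.tanh r2)
        + (NN * Real.log 2 + ((N1 : ℝ) * Real.log (Real.cosh r1)
            + (N2 : ℝ) * Real.log (Real.cosh r2)))
        - ((N1 : ℝ) * (r1 * Real.tanh r1) + (N2 : ℝ) * (r2 * Real.tanh r2)) := by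
    have hsplit : ∀ σ ∈ (Finset.univ : Finset (Fin (N1 + N2) → Bool)),
        ν σ * (-(ham J11 J12 J22 h1 h2 N1 N2 σ) - Real.log (ν σ))
        = (1 / (2 * NN)) * J11 * (ν σ * (∑ i : Fin (N1 + N2), ∑ j : Fin (N1 + N2),
              (if (i : ℕ) < N1 ∧ (j : ℕ) < N1 then spin (σ i) * spin (σ j) else 0)))
          + (1 / (2 * NN)) * (2 * J12) * (ν σ * (∑ i : Fin (N1 + N2), ∑ j : Fin (N1 + N2),
              (if (i : ℕ) < N1 ∧ N1 ≤ (j : ℕ) then spin (σ i) * spin (σ j) else 0)))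
          + (1 / (2 * NN)) * J22 * (ν σ * (∑ i : Fin (N1 + N2), ∑ j : Fin (N1 + N2),
              (if N1 ≤ (i : ℕ) ∧ N1 ≤ (j : ℕ) then spin (σ i) * spin (σ j) else 0)))
          + h1 * (ν σ * (∑ i : Fin (N1 + N2), (if (i : ℕ) < N1 then spin (σ i) else 0)))
          + h2 * (ν σ * (∑ i : Fin (N1 + N2), (if N1 ≤ (i : ℕ) then spin (σ i) else 0)))
          + ν σ * (NN * Real.log 2 + ((N1 : ℝ) * Real.log (Real.cosh r1)
              + (N2 : ℝ) * Real.log (Real.cosh r2)))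
          - ν σ * (∑ i : Fin (N1 + N2), (if (i : ℕ) < N1 then r1 else r2) * spin (σ i)) := by
      intro σ _
      rw [hlog σ]
      simp only [ham]
      rw [← hNNdef]
      ring
    rw [Finset.sum_congr rfl hsplit]
    rw [Finset.sum_sub_distrib]
    simp only [Finset.sum_add_distrib]
    simp only [← Finset.mul_sum]
    rw [hSAA, hSAB, hSBB, hSA, hSB, hconst, hSr]
  -- Jensen's inequality
  have hjen : ∑ σ : Fin (N1 + N2) → Bool,
      ν σ * (-(ham J11 J12 J22 h1 h2 N1 N2 σ) - Real.log (ν σ))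
      ≤ Real.log (∑ σ : Fin (N1 + N2) → Bool,
          Real.exp (-(ham J11 J12 J22 h1 h2 N1 N2 σ))) := by
    have key := (strictConcaveOn_log_Ioi.concaveOn).le_map_sum
      (t := (Finset.univ : Finset (Fin (N1 + N2) → Bool))) (w := ν)
      (p := fun σ => Real.exp (-(ham J11 J12 J22 h1 h2 N1 N2 σ)) / ν σ)
      (fun σ _ => (hνpos σ).le) hνsum
      (fun σ _ => Set.mem_Ioi.mpr (div_pos (Real.exp_pos _) (hνpos σ)))
    have hZ : ∑ σ : Fin (N1 + N2) → Bool,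
        ν σ • (Real.exp (-(ham J11 J12 J22 h1 h2 N1 N2 σ)) / ν σ)
        = ∑ σ : Fin (N1 + N2) → Bool, Real.exp (-(ham J11 J12 J22 h1 h2 N1 N2 σ)) :=
      Finset.sum_congr rfl fun σ _ => by
        rw [smul_eq_mul, mul_div_cancel₀ _ (hνpos σ).ne']
    rw [hZ] at key
    have hterm : ∀ σ ∈ (Finset.univ : Finset (Fin (N1 + N2) → Bool)),
        ν σ • Real.log (Real.exp (-(ham J11 J12 J22 h1 h2 N1 N2 σ)) / ν σ)
        = ν σ * (-(ham J11 J12 J22 h1 h2 N1 N2 σ) - Real.log (ν σ)) := by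
      intro σ _
      rw [smul_eq_mul, Real.log_div (Real.exp_ne_zero _) (hνpos σ).ne', Real.log_exp]
    rw [Finset.sum_congr rfl hterm] at key
    exact key
  -- put everything together
  rw [pressure, ← hNNdef, ge_iff_le]
  have hmono : (1 / NN) * (∑ σ : Fin (N1 + N2) → Bool,
      ν σ * (-(ham J11 J12 J22 h1 h2 N1 N2 σ) - Real.log (ν σ)))
      ≤ (1 / NN) * Real.log (∑ σ : Fin (N1 + N2) → Bool,
          Real.exp (-(ham J11 J12 J22 h1 h2 N1 N2 σ))) :=
    mul_le_mul_of_nonneg_left hjen (by positivity)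
  rw [hL] at hmono
  refine le_trans ?_ hmono
  have hN1R : (0:ℝ) < (N1 : ℝ) := by exact_mod_cast hN1
  have hN2R : (0:ℝ) < (N2 : ℝ) := by exact_mod_cast hN2
  have hkey : (1 / NN) * ((1 / (2 * NN)) * J11 * ((N1 : ℝ) ^ 2 * Real.tanh r1 ^ 2 + (N1 : ℝ) * (1 - Real.tanh r1 ^ 2))
        + (1 / (2 * NN)) * (2 * J12) * ((N1 : ℝ) * (N2 : ℝ) * (Real.tanh r1 * Real.tanh r2))
        + (1 / (2 * NN)) * J22 * ((N2 : ℝ) ^ 2 * Real.tanh r2 ^ 2 + (N2 : ℝ) * (1 - Real.tanh r2 ^ 2))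
        + h1 * ((N1 : ℝ) * Real.tanh r1) + h2 * ((N2 : ℝ) * Real.tanh r2)
        + (NN * Real.log 2 + ((N1 : ℝ) * Real.log (Real.cosh r1)
            + (N2 : ℝ) * Real.log (Real.cosh r2)))
        - ((N1 : ℝ) * (r1 * Real.tanh r1) + (N2 : ℝ) * (r2 * Real.tanh r2)))
      - (Real.log 2 + (N1 : ℝ) / NN * Real.log (Real.cosh r1)
          + (1 - (N1 : ℝ) / NN) * Real.log (Real.cosh r2)
          + (1 / 2) * (J11 * ((N1 : ℝ) / NN) ^ 2 * Real.tanh r1 ^ 2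
              + J22 * (1 - (N1 : ℝ) / NN) ^ 2 * Real.tanh r2 ^ 2
              + 2 * J12 * ((N1 : ℝ) / NN) * (1 - (N1 : ℝ) / NN) * Real.tanh r1 * Real.tanh r2)
          + (N1 : ℝ) / NN * h1 * Real.tanh r1 + (1 - (N1 : ℝ) / NN) * h2 * Real.tanh r2
          - (N1 : ℝ) / NN * r1 * Real.tanh r1 - (1 - (N1 : ℝ) / NN) * r2 * Real.tanh r2
          + J11 * ((N1 : ℝ) / NN) / (2 * NN) + J22 * (1 - (N1 : ℝ) / NN) / (2 * NN)
          - J11 * ((N1 : ℝ) / NN) * Real.tanh r1 ^ 2 / NN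
          - J22 * (1 - (N1 : ℝ) / NN) * Real.tanh r2 ^ 2 / NN)
      = (J11 * ((N1 : ℝ) / NN) * Real.tanh r1 ^ 2
          + J22 * ((N2 : ℝ) / NN) * Real.tanh r2 ^ 2) / (2 * NN) := by
    rw [hNN2]
    field_simp
    ring
  have hpos : (0:ℝ) ≤ (J11 * ((N1 : ℝ) / NN) * Real.tanh r1 ^ 2
      + J22 * ((N2 : ℝ) / NN) * Real.tanh r2 ^ 2) / (2 * NN) := by
    apply div_nonneg
    · exact add_nonneg
        (mul_nonneg (mul_nonneg hJ11.le (div_nonneg hN1R.le hNNpos.le)) (sq_nonneg _))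
        (mul_nonneg (mul_nonneg hJ22.le (div_nonneg hN2R.le hNNpos.le)) (sq_nonneg _))
    · linarith [hNNpos]
  linarith [hkey, hpos]
end

section
/- Integral bound on magnetization fluctuations: for any positive integers N1, N2 with N = N1 + N2, α = N1/N, and any reals a < b, the integral over h1 ∈ [a, b] of the Gibbs variance of m1 satisfies |∫_a^b (ω_N(m1²) − ω_N(m1)²) dh1| ≤ 2/(N·α); in particular this integral is O(1/N) as N → ∞. -/
open Real Filter

/-- The Gibbs state `ω_N(f)` of an observable `f`. -/
noncomputable def gibbs (J11 J12 J22 h1 h2 : ℝ) (N1 N2 : ℕ)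
    (f : (Fin (N1 + N2) → Bool) → ℝ) : ℝ :=
  (∑ σ : Fin (N1 + N2) → Bool, f σ * Real.exp (-(ham J11 J12 J22 h1 h2 N1 N2 σ))) /
    (∑ σ : Fin (N1 + N2) → Bool, Real.exp (-(ham J11 J12 J22 h1 h2 N1 N2 σ)))

/-- The block-`A` magnetization `m1(σ) = (1/N1) Σ_{i ∈ A} σ_i`. -/
noncomputable def mag1 (N1 N2 : ℕ) (σ : Fin (N1 + N2) → Bool) : ℝ :=
  (1 / (N1 : ℝ)) * ∑ i : Fin (N1 + N2), (if (i : ℕ) < N1 then spin (σ i) else 0)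

/-- Total block-`A` spin. -/
noncomputable def Ssum (N1 N2 : ℕ) (σ : Fin (N1 + N2) → Bool) : ℝ :=
  ∑ i : Fin (N1 + N2), (if (i : ℕ) < N1 then spin (σ i) else 0)

lemma neg_ham_eq (J11 J12 J22 h1 h2 : ℝ) (N1 N2 : ℕ) (σ : Fin (N1 + N2) → Bool) :
    -(ham J11 J12 J22 h1 h2 N1 N2 σ)
      = h1 * Ssum N1 N2 σ + -(ham J11 J12 J22 0 h2 N1 N2 σ) := by
  simp only [ham, Ssum]; ring

lemma hasDerivAt_exp_ham (J11 J12 J22 h2 : ℝ) (N1 N2 : ℕ)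
    (σ : Fin (N1 + N2) → Bool) (h1 : ℝ) :
    HasDerivAt (fun t => Real.exp (-(ham J11 J12 J22 t h2 N1 N2 σ)))
      (Ssum N1 N2 σ * Real.exp (-(ham J11 J12 J22 h1 h2 N1 N2 σ))) h1 := by
  have he : (fun t => Real.exp (-(ham J11 J12 J22 t h2 N1 N2 σ)))
      = fun t => Real.exp (t * Ssum N1 N2 σ + -(ham J11 J12 J22 0 h2 N1 N2 σ)) :=
    funext fun t => by rw [neg_ham_eq]
  rw [he]
  have hlin : HasDerivAt
      (fun t : ℝ => t * Ssum N1 N2 σ + -(ham J11 J12 J22 0 h2 N1 N2 σ))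
      (Ssum N1 N2 σ) h1 := by
    simpa using ((hasDerivAt_id h1).mul_const (Ssum N1 N2 σ)).add_const
      (-(ham J11 J12 J22 0 h2 N1 N2 σ))
  have := hlin.exp
  convert this using 1
  rw [neg_ham_eq J11 J12 J22 h1 h2, mul_comm]

lemma hasDerivAt_sumFE (J11 J12 J22 h2 : ℝ) (N1 N2 : ℕ)
    (f : (Fin (N1 + N2) → Bool) → ℝ) (h1 : ℝ) :
    HasDerivAt
      (fun t => ∑ σ : Fin (N1 + N2) → Bool,
        f σ * Real.exp (-(ham J11 J12 J22 t h2 N1 N2 σ)))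
      (∑ σ : Fin (N1 + N2) → Bool,
        f σ * (Ssum N1 N2 σ * Real.exp (-(ham J11 J12 J22 h1 h2 N1 N2 σ)))) h1 :=
  HasDerivAt.fun_sum fun σ _ => (hasDerivAt_exp_ham J11 J12 J22 h2 N1 N2 σ h1).const_mul (f σ)

lemma sum_indicator_eq (a b : ℕ) :
    ∑ i : Fin (a + b), (if (i : ℕ) < a then (1 : ℝ) else 0) = a := by
  rw [Fin.sum_univ_eq_sum_range (fun i => if i < a then (1 : ℝ) else 0)]
  induction b with
  | zero =>
    rw [Nat.add_zero, Finset.sum_ite_of_true (fun i hi => Finset.mem_range.mp hi)]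
    simp
  | succ n ih => rw [← Nat.add_assoc, Finset.sum_range_succ, if_neg (by omega), add_zero, ih]

lemma abs_mag1_le (N1 N2 : ℕ) (hN1 : 0 < N1) (σ : Fin (N1 + N2) → Bool) :
    |mag1 N1 N2 σ| ≤ 1 := by
  have hN1' : (0:ℝ) < (N1 : ℝ) := by exact_mod_cast hN1
  have hb : |∑ i : Fin (N1 + N2), (if (i : ℕ) < N1 then spin (σ i) else 0)| ≤ (N1 : ℝ) := by
    calc |∑ i : Fin (N1 + N2), (if (i : ℕ) < N1 then spin (σ i) else 0)|
        ≤ ∑ i : Fin (N1 + N2), |if (i : ℕ) < N1 then spin (σ i) else 0| :=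
          Finset.abs_sum_le_sum_abs _ _
      _ ≤ ∑ i : Fin (N1 + N2), (if (i : ℕ) < N1 then (1:ℝ) else 0) := by
          apply Finset.sum_le_sum
          intro i _
          by_cases h : (i : ℕ) < N1 <;> simp [h, spin] <;> split <;> norm_num
      _ = (N1 : ℝ) := sum_indicator_eq N1 N2
  rw [mag1, abs_mul, abs_of_pos (by positivity : (0:ℝ) < 1 / (N1:ℝ))]
  rw [div_mul_eq_mul_div, one_mul, div_le_one hN1']
  exact hb

/-- the integral over `h1 ∈ [a,b]` of the Gibbs variance of `m1`
is bounded by `2/(N α)` (with `α = N1/N`), hence is `O(1/N)`. -/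
theorem magnetization_fluctuation_integral_bound
    (J11 J12 J22 h2 : ℝ) (hJ11 : 0 < J11) (hJ22 : 0 < J22)
    (N1 N2 : ℕ) (hN1 : 0 < N1) (hN2 : 0 < N2)
    (α NR : ℝ) (hα : α = (N1 : ℝ) / ((N1 + N2 : ℕ) : ℝ)) (hNR : NR = ((N1 + N2 : ℕ) : ℝ))
    (a b : ℝ) (hab : a < b) :
    |∫ h1 in a..b,
        (gibbs J11 J12 J22 h1 h2 N1 N2 (fun σ => (mag1 N1 N2 σ) ^ 2) -
          (gibbs J11 J12 J22 h1 h2 N1 N2 (mag1 N1 N2)) ^ 2)| ≤ 2 / (NR * α) := by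
  have hN1R : (0:ℝ) < (N1 : ℝ) := by exact_mod_cast hN1
  have hNcast : (0:ℝ) < ((N1 + N2 : ℕ) : ℝ) := by positivity
  -- abbreviations
  set E : ℝ → (Fin (N1 + N2) → Bool) → ℝ :=
    fun t σ => Real.exp (-(ham J11 J12 J22 t h2 N1 N2 σ)) with hE
  set Z : ℝ → ℝ := fun t => ∑ σ : Fin (N1 + N2) → Bool, E t σ with hZ
  set M : ℝ → ℝ := fun t => ∑ σ : Fin (N1 + N2) → Bool, mag1 N1 N2 σ * E t σ with hM
  set Q : ℝ → ℝ := fun t => ∑ σ : Fin (N1 + N2) → Bool, (mag1 N1 N2 σ)^2 * E t σ with hQ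
  have hZpos : ∀ t, 0 < Z t := fun t =>
    Finset.sum_pos (fun σ _ => Real.exp_pos _) Finset.univ_nonempty
  have hZne : ∀ t, Z t ≠ 0 := fun t => (hZpos t).ne'
  have hSeq : ∀ σ, Ssum N1 N2 σ = (N1 : ℝ) * mag1 N1 N2 σ := by
    intro σ
    rw [mag1, Ssum]
    field_simp
  -- derivatives
  have hZ' : ∀ t, HasDerivAt Z ((N1:ℝ) * M t) t := by
    intro t
    have := hasDerivAt_sumFE J11 J12 J22 h2 N1 N2 (fun _ => 1) t
    simp only [one_mul] at this
    convert this using 1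
    rw [hM, Finset.mul_sum]
    congr 1
    funext σ
    rw [hSeq σ]
    ring
  have hM' : ∀ t, HasDerivAt M ((N1:ℝ) * Q t) t := by
    intro t
    have := hasDerivAt_sumFE J11 J12 J22 h2 N1 N2 (mag1 N1 N2) t
    convert this using 1
    rw [hQ, Finset.mul_sum]
    congr 1
    funext σ
    rw [hSeq σ]
    ring
  have hQ' : ∀ t, HasDerivAt Q
      (∑ σ : Fin (N1 + N2) → Bool,
        (mag1 N1 N2 σ)^2 * (Ssum N1 N2 σ * E t σ)) t := fun t =>
    hasDerivAt_sumFE J11 J12 J22 h2 N1 N2 (fun σ => (mag1 N1 N2 σ)^2) t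
  -- gibbs expressed through M, Q, Z
  have hgM : ∀ t, gibbs J11 J12 J22 t h2 N1 N2 (mag1 N1 N2) = M t / Z t := fun t => rfl
  have hgQ : ∀ t, gibbs J11 J12 J22 t h2 N1 N2 (fun σ => (mag1 N1 N2 σ)^2) = Q t / Z t :=
    fun t => rfl
  -- derivative of F = M/Z
  set F : ℝ → ℝ := fun t => M t / Z t with hF
  set V : ℝ → ℝ := fun t => Q t / Z t - (M t / Z t)^2 with hV
  have hF' : ∀ t, HasDerivAt F ((N1:ℝ) * V t) t := by
    intro t
    have hdiv := (hM' t).div (hZ' t) (hZne t)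
    refine hdiv.congr_deriv ?_
    rw [hV]
    field_simp
  -- continuity of V
  have hcontZ : Continuous Z := by
    rw [continuous_iff_continuousAt]; exact fun t => (hZ' t).continuousAt
  have hcontM : Continuous M := by
    rw [continuous_iff_continuousAt]; exact fun t => (hM' t).continuousAt
  have hcontQ : Continuous Q := by
    rw [continuous_iff_continuousAt]; exact fun t => (hQ' t).continuousAt
  have hcontV : Continuous V :=
    (hcontQ.div hcontZ hZne).sub ((hcontM.div hcontZ hZne).pow 2)
  -- FTC
  have hftc : ∫ t in a..b, (N1:ℝ) * V t = F b - F a :=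
    intervalIntegral.integral_eq_sub_of_hasDerivAt (fun t _ => hF' t)
      ((continuous_const.mul hcontV).intervalIntegrable a b)
  have hint : (∫ t in a..b, V t) = (F b - F a) / (N1:ℝ) := by
    rw [eq_div_iff hN1R.ne', mul_comm]
    rw [← hftc, ← intervalIntegral.integral_const_mul]
  -- bound on F
  have hFb : ∀ t, |F t| ≤ 1 := by
    intro t
    rw [hF, abs_div, abs_of_pos (hZpos t), div_le_one (hZpos t)]
    calc |M t| ≤ ∑ σ : Fin (N1 + N2) → Bool, |mag1 N1 N2 σ * E t σ| :=
          Finset.abs_sum_le_sum_abs _ _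
      _ ≤ ∑ σ : Fin (N1 + N2) → Bool, E t σ := by
          apply Finset.sum_le_sum
          intro σ _
          rw [abs_mul, abs_of_pos (Real.exp_pos _)]
          have := abs_mag1_le N1 N2 hN1 σ
          nlinarith [Real.exp_pos (-(ham J11 J12 J22 t h2 N1 N2 σ))]
      _ = Z t := rfl
  -- conclude
  have hNRα : NR * α = (N1 : ℝ) := by
    rw [hNR, hα]
    field_simp
  rw [hNRα]
  have : |∫ h1 in a..b,
      (gibbs J11 J12 J22 h1 h2 N1 N2 (fun σ => (mag1 N1 N2 σ) ^ 2) -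
        (gibbs J11 J12 J22 h1 h2 N1 N2 (mag1 N1 N2)) ^ 2)| = |(F b - F a) / (N1:ℝ)| := by
    rw [← hint]
    congr 1
  rw [this, abs_div, abs_of_pos hN1R, div_le_div_iff₀ hN1R hN1R]
  have h1 := hFb a
  have h2 := hFb b
  have : |F b - F a| ≤ 2 := by
    calc |F b - F a| ≤ |F b| + |F a| := abs_sub _ _
      _ ≤ 2 := by linarith
  nlinarith
end
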